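/- Consider a Markov chain on a finite state space X with transition probabilities p_{x→y}, a target set A ⊆ X, and a distance function D: X → [0,∞) with D(x) = 0 iff x ∈ A. Suppose for every integer k ≥ 1 there is l_k > 0 such that every x ∉ A with ⌈D(x)⌉ ≥ k satisfies the drift condition D(x) - Σ_y p_{x→y} D(y) ≥ l_k. Then the expected hitting time of A starting from ξ₀ satisfies E(T | X₀ = ξ₀) ≤ Σ_{k=1}^{⌈D(ξ₀)⌉} 1/l_k. -/

import Mathlib

open Finset


private noncomputable def driftM (l : ℕ → ℝ) : ℕ → ℝ
  | 0 => l 1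
  | (i+1) => max (driftM l i) (l (i+2))

private lemma driftM_pos {l : ℕ → ℝ} (hl : ∀ k, 1 ≤ k → 0 < l k) (i : ℕ) :
    0 < driftM l i := by
  induction i with
  | zero => exact hl 1 le_rfl
  | succ n ih => exact lt_max_of_lt_left ih

private lemma driftM_mono {l : ℕ → ℝ} : Monotone (driftM l) :=
  monotone_nat_of_le_succ (fun n => le_max_left _ _)

private lemma le_driftM {l : ℕ → ℝ} (i : ℕ) : l (i+1) ≤ driftM l i := by
  cases i with
  | zero => exact le_rfl
  | succ n => exact le_max_right _ _

private lemma driftM_eq {l : ℕ → ℝ} (i : ℕ) :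
    ∃ j, 1 ≤ j ∧ j ≤ i + 1 ∧ driftM l i = l j := by
  induction i with
  | zero => exact ⟨1, le_rfl, le_rfl, rfl⟩
  | succ n ih =>
    rcases ih with ⟨j, h1, h2, h3⟩
    rcases max_choice (driftM l n) (l (n+2)) with hmx | hmx
    · exact ⟨j, h1, h2.trans (by omega), by rw [driftM, hmx, h3]⟩
    · exact ⟨n+2, by omega, le_rfl, by rw [driftM, hmx]⟩

private noncomputable def phiD (s : ℝ) (i : ℕ) : ℝ := min s ((i:ℝ)+1) - min s (i:ℝ)

private noncomputable def driftG (l : ℕ → ℝ) (N : ℕ) (s : ℝ) : ℝ :=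
  ∑ i ∈ range N, phiD s i / driftM l i

private lemma phiD_nonneg (s : ℝ) (i : ℕ) : 0 ≤ phiD s i :=
  sub_nonneg.mpr (min_le_min le_rfl (by linarith))

private lemma phiD_le_one (s : ℝ) (i : ℕ) : phiD s i ≤ 1 := by
  unfold phiD
  rcases le_total s (i:ℝ) with hc | hc
  · rw [min_eq_left hc, min_eq_left (by linarith)]; linarith
  · rw [min_eq_right hc]
    have : min s ((i:ℝ)+1) ≤ (i:ℝ)+1 := min_le_right _ _
    linarith

private lemma phiD_eq_one {s : ℝ} {i : ℕ} (hs : (i:ℝ)+1 ≤ s) : phiD s i = 1 := by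
  unfold phiD
  rw [min_eq_right hs, min_eq_right (by linarith)]
  ring

private lemma phiD_eq_zero {s : ℝ} {i : ℕ} (hs : s ≤ (i:ℝ)) : phiD s i = 0 := by
  unfold phiD
  rw [min_eq_left hs, min_eq_left (by linarith)]
  ring

private lemma phiD_sum {N : ℕ} {s : ℝ} (hs0 : 0 ≤ s) (hsN : s ≤ (N:ℝ)) :
    ∑ i ∈ range N, phiD s i = s := by
  have heq : ∀ i ∈ range N, phiD s i =
      (fun j : ℕ => min s (j:ℝ)) (i+1) - (fun j : ℕ => min s (j:ℝ)) i := by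
    intro i _
    unfold phiD
    push_cast
    ring_nf
  calc ∑ i ∈ range N, phiD s i
      = ∑ i ∈ range N, ((fun j : ℕ => min s (j:ℝ)) (i+1) - (fun j : ℕ => min s (j:ℝ)) i) :=
        Finset.sum_congr rfl heq
    _ = (fun j : ℕ => min s (j:ℝ)) N - (fun j : ℕ => min s (j:ℝ)) 0 := Finset.sum_range_sub (f := fun j : ℕ => min s (j:ℝ)) N
    _ = s := by simp only []; rw [min_eq_left hsN]; norm_num [min_eq_right hs0]

private lemma driftG_nonneg {l : ℕ → ℝ} (hl : ∀ k, 1 ≤ k → 0 < l k) (N : ℕ) (s : ℝ) :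
    0 ≤ driftG l N s :=
  Finset.sum_nonneg fun i _ => div_nonneg (phiD_nonneg s i) (driftM_pos hl i).le

private lemma driftG_le {l : ℕ → ℝ} (hl : ∀ k, 1 ≤ k → 0 < l k) {N : ℕ} {s : ℝ}
    (hs0 : 0 ≤ s) (hKN : ⌈s⌉.toNat ≤ N) :
    driftG l N s ≤ ∑ k ∈ Icc 1 (⌈s⌉.toNat), 1 / l k := by
  set K := ⌈s⌉.toNat with hK
  have hsK : s ≤ (K : ℝ) := by
    have h1 := Int.le_ceil s
    have h2 : ((⌈s⌉.toNat : ℤ) : ℝ) = (K : ℝ) := by norm_cast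
    rw [Int.toNat_of_nonneg (Int.ceil_nonneg hs0)] at h2
    linarith [h2 ▸ h1]
  have step1 : driftG l N s = ∑ i ∈ range K, phiD s i / driftM l i := by
    unfold driftG
    refine (Finset.sum_subset (Finset.range_subset_range.mpr hKN) ?_).symm
    intro i _ hiK
    have hKi : K ≤ i := by simpa using hiK
    rw [phiD_eq_zero (hsK.trans (by exact_mod_cast hKi)), zero_div]
  rw [step1]
  have step3 : ∑ k ∈ Icc 1 K, 1 / l k = ∑ i ∈ range K, 1 / l (1 + i) := by
    rw [← Finset.Ico_add_one_right_eq_Icc, Finset.sum_Ico_eq_sum_range]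
    simp
  rw [step3]
  refine Finset.sum_le_sum fun i _ => ?_
  have hMi := driftM_pos hl i
  have hli := hl (1+i) (by omega)
  have hlM : l (1+i) ≤ driftM l i := by rw [Nat.add_comm]; exact le_driftM i
  rw [div_le_div_iff₀ hMi hli]
  nlinarith [phiD_le_one s i, phiD_nonneg s i]

private lemma driftG_concave {l : ℕ → ℝ} (hl : ∀ k, 1 ≤ k → 0 < l k) {N K' : ℕ}
    {s t : ℝ} (hs0 : 0 ≤ s) (hsN : s ≤ (N:ℝ)) (ht0 : 0 ≤ t) (htN : t ≤ (N:ℝ))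
    (hK : ⌈s⌉.toNat = K' + 1) :
    driftG l N t - driftG l N s ≤ (t - s) / driftM l K' := by
  have hceil : ⌈s⌉ = (K' : ℤ) + 1 := by omega
  have hsK : s ≤ (K':ℝ) + 1 := by
    have := Int.ceil_le.mp (le_of_eq hceil)
    push_cast at this
    linarith
  have hK's : (K' : ℝ) < s := by
    have : (K' : ℤ) < ⌈s⌉ := by omega
    have := Int.lt_ceil.mp this
    push_cast at this
    linarith
  have perterm : ∀ i ∈ range N,
      (phiD t i - phiD s i) / driftM l i ≤ (phiD t i - phiD s i) / driftM l K' := by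
    intro i _
    have hMi := driftM_pos hl i
    have hMK := driftM_pos hl K'
    rcases lt_trichotomy i K' with hik | hik | hik
    · have h1 : phiD s i = 1 := phiD_eq_one (by
        have : (i:ℝ) + 1 ≤ (K':ℝ) := by exact_mod_cast Nat.succ_le_of_lt hik
        linarith)
      have hmono : driftM l i ≤ driftM l K' := driftM_mono hik.le
      rw [div_le_div_iff₀ hMi hMK, h1]
      nlinarith [phiD_le_one t i]
    · rw [hik]
    · have h0 : phiD s i = 0 := phiD_eq_zero (by
        have : (K':ℝ) + 1 ≤ (i:ℝ) := by exact_mod_cast hik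
        linarith)
      have hmono : driftM l K' ≤ driftM l i := driftM_mono hik.le
      rw [div_le_div_iff₀ hMi hMK, h0]
      nlinarith [phiD_nonneg t i]
  calc driftG l N t - driftG l N s
      = ∑ i ∈ range N, (phiD t i - phiD s i) / driftM l i := by
        unfold driftG
        rw [← Finset.sum_sub_distrib]
        exact Finset.sum_congr rfl fun i _ => (sub_div _ _ _).symm
    _ ≤ ∑ i ∈ range N, (phiD t i - phiD s i) / driftM l K' := Finset.sum_le_sum perterm
    _ = (t - s) / driftM l K' := by
        rw [← Finset.sum_div, Finset.sum_sub_distrib, phiD_sum ht0 htN, phiD_sum hs0 hsN]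

/-- Variable drift theorem.  Given a Markov chain on a finite state space `X` with
transition probabilities `p`, a target set `A`, a distance function `D` vanishing
exactly on `A`, and drift constants `l k > 0` such that every `x ∉ A` with
`⌈D x⌉ ≥ k` satisfies `D x - ∑ y, p x y * D y ≥ l k`, the expected hitting time
function `h` of `A` (characterised by `h = 0` on `A` and the first-step equation
`h x = 1 + ∑ y, p x y * h y` off `A`) satisfies
`h ξ₀ ≤ ∑_{k=1}^{⌈D ξ₀⌉} 1 / l k`. -/
theorem stmt8 {X : Type*} [Fintype X] (p : X → X → ℝ)
    (hp0 : ∀ x y, 0 ≤ p x y) (hp1 : ∀ x, ∑ y, p x y = 1)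
    (A : Set X) (D : X → ℝ)
    (hD0 : ∀ x, 0 ≤ D x) (hDA : ∀ x, D x = 0 ↔ x ∈ A)
    (l : ℕ → ℝ) (hl : ∀ k, 1 ≤ k → 0 < l k)
    (hdrift : ∀ x ∉ A, ∀ k : ℕ, 1 ≤ k → (k : ℤ) ≤ ⌈D x⌉ →
      D x - ∑ y, p x y * D y ≥ l k)
    (h : X → ℝ) (hh0 : ∀ x, 0 ≤ h x)
    (hhA : ∀ x ∈ A, h x = 0)
    (hstep : ∀ x ∉ A, h x = 1 + ∑ y, p x y * h y)
    (ξ₀ : X) :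
    h ξ₀ ≤ ∑ k ∈ Finset.Icc 1 (⌈D ξ₀⌉.toNat), 1 / l k := by
  classical
  set N : ℕ := Finset.univ.sup (fun z : X => ⌈D z⌉.toNat) with hNdef
  have hKN : ∀ z : X, ⌈D z⌉.toNat ≤ N := by
    intro z
    rw [hNdef]
    exact Finset.le_sup (f := fun z : X => ⌈D z⌉.toNat) (Finset.mem_univ z)
  have hDceil : ∀ z : X, D z ≤ ((⌈D z⌉.toNat : ℕ) : ℝ) := by
    intro z
    have h1 := Int.le_ceil (D z)
    have h2 : ((⌈D z⌉.toNat : ℤ) : ℝ) = ((⌈D z⌉.toNat : ℕ) : ℝ) := by push_cast; ring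
    rw [Int.toNat_of_nonneg (Int.ceil_nonneg (hD0 z))] at h2
    linarith [h2 ▸ h1]
  have hDle : ∀ z : X, D z ≤ (N : ℝ) := fun z =>
    (hDceil z).trans (by exact_mod_cast hKN z)
  set G : X → ℝ := fun z => driftG l N (D z) with hGdef
  have hGnn : ∀ z, 0 ≤ G z := fun z => driftG_nonneg hl N (D z)
  have hGle : ∀ z, G z ≤ ∑ k ∈ Finset.Icc 1 (⌈D z⌉.toNat), 1 / l k :=
    fun z => driftG_le hl (hD0 z) (hKN z)
  -- supersolution property
  have hsuper : ∀ x ∉ A, 1 + ∑ y, p x y * G y ≤ G x := by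
    intro x hx
    have hDx : 0 < D x := (hD0 x).lt_of_ne (fun e => hx ((hDA x).mp e.symm))
    have hceil1 : (1:ℤ) ≤ ⌈D x⌉ := Int.ceil_pos.mpr hDx
    obtain ⟨K', hK'⟩ : ∃ K', ⌈D x⌉.toNat = K' + 1 := ⟨⌈D x⌉.toNat - 1, by omega⟩
    obtain ⟨j, hj1, hj2, hj3⟩ := driftM_eq (l := l) K'
    have hjceil : (j : ℤ) ≤ ⌈D x⌉ := by omega
    have hdr : D x - ∑ y, p x y * D y ≥ driftM l K' := by
      rw [hj3]; exact hdrift x hx j hj1 hjceil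
    have hMK := driftM_pos hl K'
    have key : ∀ y : X, p x y * G y ≤ p x y * (G x + (D y - D x) / driftM l K') := by
      intro y
      refine mul_le_mul_of_nonneg_left ?_ (hp0 x y)
      have := driftG_concave hl (hD0 x) (hDle x) (hD0 y) (hDle y) hK'
      simp only [hGdef]
      linarith
    have expand : ∑ y, p x y * (G x + (D y - D x) / driftM l K')
        = G x + ((∑ y, p x y * D y) - D x) / driftM l K' := by
      have e1 : ∀ y : X, p x y * (G x + (D y - D x) / driftM l K')
          = p x y * G x + (p x y * D y) / driftM l K' - (p x y * D x) / driftM l K' := by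
        intro y; field_simp; ring
      rw [Finset.sum_congr rfl (fun y _ => e1 y)]
      rw [Finset.sum_sub_distrib, Finset.sum_add_distrib, ← Finset.sum_mul,
        ← Finset.sum_div, ← Finset.sum_div, ← Finset.sum_mul, hp1 x]
      ring
    have hdiv : ((∑ y, p x y * D y) - D x) / driftM l K' ≤ -1 := by
      rw [div_le_iff₀ hMK]
      linarith
    calc 1 + ∑ y, p x y * G y ≤ 1 + ∑ y, p x y * (G x + (D y - D x) / driftM l K') :=
          by linarith [Finset.sum_le_sum (fun y (_ : y ∈ Finset.univ) => key y)]
      _ = 1 + (G x + ((∑ y, p x y * D y) - D x) / driftM l K') := by rw [expand]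
      _ ≤ G x := by linarith
  -- maximum principle
  obtain ⟨x₁, -, hx₁⟩ := Finset.exists_max_image (Finset.univ : Finset X)
    (fun z => h z - G z) ⟨ξ₀, Finset.mem_univ ξ₀⟩
  set c := h x₁ - G x₁ with hcdef
  have hc : ∀ z, h z - G z ≤ c := fun z => hx₁ z (Finset.mem_univ z)
  have hcle : c ≤ 0 := by
    by_contra hpos
    push_neg at hpos
    obtain ⟨x₀, hx₀M, hx₀min⟩ := Finset.exists_min_image
      (Finset.univ.filter (fun z => c ≤ h z - G z)) D ⟨x₁, by simp [hcdef]⟩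
    have hx₀c : c ≤ h x₀ - G x₀ := (Finset.mem_filter.mp hx₀M).2
    have hx₀A : x₀ ∉ A := by
      intro hA
      have := hhA x₀ hA
      have := hGnn x₀
      linarith
    have hDx₀ : 0 < D x₀ := (hD0 x₀).lt_of_ne (fun e => hx₀A ((hDA x₀).mp e.symm))
    have hsum : ∑ y, p x₀ y * (c - (h y - G y)) ≤ 0 := by
      have e1 : h x₀ = 1 + ∑ y, p x₀ y * h y := hstep x₀ hx₀A
      have e2 := hsuper x₀ hx₀A
      have expand : ∑ y, p x₀ y * (c - (h y - G y))
          = c - ∑ y, p x₀ y * h y + ∑ y, p x₀ y * G y := by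
        have e3 : ∀ y : X, p x₀ y * (c - (h y - G y))
            = p x₀ y * c - p x₀ y * h y + p x₀ y * G y := by intro y; ring
        rw [Finset.sum_congr rfl (fun y _ => e3 y), Finset.sum_add_distrib,
          Finset.sum_sub_distrib, ← Finset.sum_mul, hp1 x₀]
        ring
      rw [expand]
      linarith
    have hterms : ∀ y ∈ Finset.univ, (0:ℝ) ≤ p x₀ y * (c - (h y - G y)) :=
      fun y _ => mul_nonneg (hp0 _ _) (by linarith [hc y])
    have hzero := (Finset.sum_eq_zero_iff_of_nonneg hterms).mp
      (le_antisymm hsum (Finset.sum_nonneg hterms))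
    have hdr : D x₀ - ∑ y, p x₀ y * D y ≥ l 1 :=
      hdrift x₀ hx₀A 1 le_rfl (Int.ceil_pos.mpr hDx₀)
    have hlt : ∑ y, p x₀ y * D y < D x₀ := by linarith [hl 1 le_rfl]
    have hex : ∃ y, 0 < p x₀ y ∧ D y < D x₀ := by
      by_contra hno
      push_neg at hno
      have hge : D x₀ ≤ ∑ y, p x₀ y * D y := by
        calc D x₀ = ∑ y, p x₀ y * D x₀ := by rw [← Finset.sum_mul, hp1 x₀, one_mul]
          _ ≤ ∑ y, p x₀ y * D y := by
            refine Finset.sum_le_sum fun y _ => ?_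
            rcases (hp0 x₀ y).eq_or_lt with hp | hp
            · rw [← hp]; ring_nf; exact le_rfl
            · exact mul_le_mul_of_nonneg_left (hno y hp) (hp0 x₀ y)
      linarith
    obtain ⟨y, hpy, hDy⟩ := hex
    have hy0 : p x₀ y * (c - (h y - G y)) = 0 := hzero y (Finset.mem_univ y)
    have hyc : c ≤ h y - G y := by
      rcases mul_eq_zero.mp hy0 with hp | hq
      · exact absurd hp (ne_of_gt hpy)
      · linarith [sub_eq_zero.mp hq]
    have : D x₀ ≤ D y := hx₀min y (Finset.mem_filter.mpr ⟨Finset.mem_univ y, hyc⟩)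
    linarith
  have h1 : h ξ₀ ≤ G ξ₀ := by linarith [hc ξ₀, hGnn ξ₀]
  exact h1.trans (hGle ξ₀)
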